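/- Let Γ be a group, K a field, and N a normal subgroup of finite index in Γ. Define, for each finitely presented K[Γ]-module M, dim_{K[Γ/N]}(M) = dim_K(K ⊗_{K[N]} M) / |Γ : N|. Then dim_{K[Γ/N]} is a Sylvester module rank function on K[Γ]. -/

import Mathlib

/-- A Sylvester module rank function on a ring `R`: an assignment of a nonnegative real
number to each (bundled) `R`-module — only its values on finitely presented modules
matter — which is invariant under isomorphism of finitely presented modules and
satisfies `(SMod1)` `dim 0 = 0`, `dim R = 1`; `(SMod2)` additivity on direct sums; and
`(SMod3)` `dim M₃ ≤ dim M₂ ≤ dim M₁ + dim M₃` for exact sequences `M₁ → M₂ → M₃ → 0`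
of finitely presented modules. -/
structure SylvesterRank (R : Type) [Ring R] where
  /-- the rank of a bundled `R`-module -/
  d : ModuleCat.{0} R → ℝ
  nonneg : ∀ M : ModuleCat.{0} R, Module.FinitePresentation R M → 0 ≤ d M
  d_congr : ∀ M N : ModuleCat.{0} R, Module.FinitePresentation R M →
    Module.FinitePresentation R N → Nonempty (M ≃ₗ[R] N) → d M = d N
  d_zero : d (ModuleCat.of R PUnit) = 0
  d_one : d (ModuleCat.of R R) = 1
  d_add : ∀ M N : ModuleCat.{0} R, Module.FinitePresentation R M →
    Module.FinitePresentation R N → d (ModuleCat.of R (M × N)) = d M + d N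
  d_exact : ∀ (M₁ M₂ M₃ : ModuleCat.{0} R), Module.FinitePresentation R M₁ →
    Module.FinitePresentation R M₂ → Module.FinitePresentation R M₃ →
    ∀ (f : M₁ →ₗ[R] M₂) (g : M₂ →ₗ[R] M₃), Function.Exact f g → Function.Surjective g →
      d M₃ ≤ d M₂ ∧ d M₂ ≤ d M₁ + d M₃

/-- The extension of a Sylvester module rank function to arbitrary (in practice,
finitely generated) modules:
`dim M = inf { dim M′ : M′ finitely presented, M a quotient of M′ }`. -/
noncomputable def SylvesterRank.toFG {R : Type} [Ring R] (ρ : SylvesterRank R)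
    (M : ModuleCat.{0} R) : ℝ :=
  sInf {x : ℝ | ∃ M' : ModuleCat.{0} R, Module.FinitePresentation R M' ∧
    (∃ f : M' →ₗ[R] M, Function.Surjective f) ∧ x = ρ.d M'}
/-- For a module `M` over a group algebra `K[Γ]` and a subgroup `N ≤ Γ`, the
submodule generated by the elements `n • m - m` (`n ∈ N`, `m ∈ M`); the quotient by
it is the module of `N`-coinvariants `K ⊗_{K[N]} M`. -/
noncomputable def coinvKer (K : Type) [Field K] (Γ : Type) [Group Γ] (N : Subgroup Γ)
    (M : ModuleCat.{0} (MonoidAlgebra K Γ)) : Submodule (MonoidAlgebra K Γ) M :=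
  Submodule.span (MonoidAlgebra K Γ)
    {x : M | ∃ n ∈ N, ∃ m : M, x = (MonoidAlgebra.of K Γ n) • m - m}

namespace Stmt12Aux

variable {K : Type} [Field K] {Γ : Type} [Group Γ] (N : Subgroup Γ)

lemma gen_mem {M : ModuleCat.{0} (MonoidAlgebra K Γ)} {n : Γ} (hn : n ∈ N) (m : M) :
    (MonoidAlgebra.of K Γ n) • m - m ∈ coinvKer K Γ N M :=
  Submodule.subset_span ⟨n, hn, m, rfl⟩

lemma ck_comap {M M' : ModuleCat.{0} (MonoidAlgebra K Γ)} (f : M →ₗ[MonoidAlgebra K Γ] M') :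
    coinvKer K Γ N M ≤ (coinvKer K Γ N M').comap f := by
  rw [coinvKer, Submodule.span_le]
  rintro x ⟨n, hn, m, rfl⟩
  have : f ((MonoidAlgebra.of K Γ n) • m - m)
      = (MonoidAlgebra.of K Γ n) • f m - f m := by
    rw [map_sub, map_smul]
  exact Submodule.mem_comap.2 (this ▸ gen_mem N hn (f m))

noncomputable def barMap {M M' : ModuleCat.{0} (MonoidAlgebra K Γ)} (f : M →ₗ[MonoidAlgebra K Γ] M') :
    (M ⧸ coinvKer K Γ N M) →ₗ[MonoidAlgebra K Γ] (M' ⧸ coinvKer K Γ N M') :=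
  Submodule.mapQ _ _ f (ck_comap N f)

lemma barMap_mk {M M' : ModuleCat.{0} (MonoidAlgebra K Γ)} (f : M →ₗ[MonoidAlgebra K Γ] M')
    (m : M) : barMap N f (Submodule.Quotient.mk m) = Submodule.Quotient.mk (f m) := rfl

lemma barMap_surjective {M M' : ModuleCat.{0} (MonoidAlgebra K Γ)}
    {f : M →ₗ[MonoidAlgebra K Γ] M'} (hf : Function.Surjective f) :
    Function.Surjective (barMap N f) := by
  intro y
  obtain ⟨m', rfl⟩ := Submodule.Quotient.mk_surjective _ y
  obtain ⟨m, rfl⟩ := hf m'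
  exact ⟨Submodule.Quotient.mk m, rfl⟩

lemma barMap_comp {M₁ M₂ M₃ : ModuleCat.{0} (MonoidAlgebra K Γ)}
    (f : M₁ →ₗ[MonoidAlgebra K Γ] M₂) (g : M₂ →ₗ[MonoidAlgebra K Γ] M₃) :
    (barMap N g).comp (barMap N f) = barMap N (g.comp f) := by
  apply Submodule.linearMap_qext
  rfl

lemma barMap_id {M : ModuleCat.{0} (MonoidAlgebra K Γ)} :
    barMap N (LinearMap.id : M →ₗ[MonoidAlgebra K Γ] M) = LinearMap.id := by
  apply Submodule.linearMap_qext
  rfl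

lemma ck_eq_map {M M' : ModuleCat.{0} (MonoidAlgebra K Γ)}
    {g : M →ₗ[MonoidAlgebra K Γ] M'} (hg : Function.Surjective g) :
    coinvKer K Γ N M' = (coinvKer K Γ N M).map g := by
  refine le_antisymm ?_ (Submodule.map_le_iff_le_comap.2 (ck_comap N g))
  rw [coinvKer, Submodule.span_le]
  rintro x ⟨n, hn, m', rfl⟩
  obtain ⟨m, rfl⟩ := hg m'
  refine ⟨(MonoidAlgebra.of K Γ n) • m - m, gen_mem N hn m, ?_⟩
  rw [map_sub, map_smul]

lemma barMap_exact {M₁ M₂ M₃ : ModuleCat.{0} (MonoidAlgebra K Γ)}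
    {f : M₁ →ₗ[MonoidAlgebra K Γ] M₂} {g : M₂ →ₗ[MonoidAlgebra K Γ] M₃}
    (hfg : Function.Exact f g) (hg : Function.Surjective g) :
    Function.Exact (barMap N f) (barMap N g) := by
  rw [LinearMap.exact_iff] at hfg ⊢
  refine le_antisymm ?_ ?_
  · -- ker ⊆ range
    intro y hy
    obtain ⟨m, rfl⟩ := Submodule.Quotient.mk_surjective _ y
    rw [LinearMap.mem_ker, barMap_mk, Submodule.Quotient.mk_eq_zero] at hy
    rw [ck_eq_map N hg] at hy
    obtain ⟨z, hz, hzg⟩ := hy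
    have hker : g (m - z) = 0 := by rw [map_sub, hzg, sub_self]
    have : m - z ∈ LinearMap.range f := by rw [← hfg]; exact hker
    obtain ⟨w, hw⟩ := this
    refine ⟨Submodule.Quotient.mk w, ?_⟩
    rw [barMap_mk, hw]
    exact (Submodule.Quotient.eq _).2 (by simpa using Submodule.neg_mem _ hz)
  · rintro y ⟨x, rfl⟩
    obtain ⟨m, rfl⟩ := Submodule.Quotient.mk_surjective _ x
    rw [LinearMap.mem_ker, barMap_mk, barMap_mk, Submodule.Quotient.mk_eq_zero]
    have : g (f m) = 0 := by
      have := hfg ▸ LinearMap.mem_range_self f m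
      exact this
    rw [this]
    exact Submodule.zero_mem _


/-- `K`-module structure on the coinvariants, via `algebraMap K K[Γ]`. -/
noncomputable local instance kmod (M : ModuleCat.{0} (MonoidAlgebra K Γ)) :
    Module K (M ⧸ coinvKer K Γ N M) :=
  Module.compHom _ (algebraMap K (MonoidAlgebra K Γ))

noncomputable local instance kmodOf (X : Type) [AddCommGroup X] [Module (MonoidAlgebra K Γ) X] :
    Module K ((ModuleCat.of (MonoidAlgebra K Γ) X) ⧸ coinvKer K Γ N (ModuleCat.of _ X)) :=
  kmod N (ModuleCat.of _ X)

lemma kmod_smul {M : ModuleCat.{0} (MonoidAlgebra K Γ)} (k : K)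
    (x : M ⧸ coinvKer K Γ N M) :
    k • x = (algebraMap K (MonoidAlgebra K Γ) k) • x := rfl

example (M : ModuleCat.{0} (MonoidAlgebra K Γ)) :
    Module.finrank K (RestrictScalars K (MonoidAlgebra K Γ) (M ⧸ coinvKer K Γ N M))
      = Module.finrank K (M ⧸ coinvKer K Γ N M) := rfl

lemma of_smul_bar {M : ModuleCat.{0} (MonoidAlgebra K Γ)} {n : Γ} (hn : n ∈ N)
    (x : M ⧸ coinvKer K Γ N M) : (MonoidAlgebra.of K Γ n) • x = x := by
  obtain ⟨m, rfl⟩ := Submodule.Quotient.mk_surjective _ x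
  rw [← Submodule.Quotient.mk_smul]
  exact (Submodule.Quotient.eq _).2 (gen_mem N hn m)

lemma of_out_smul {M : ModuleCat.{0} (MonoidAlgebra K Γ)} (g : Γ)
    (x : M ⧸ coinvKer K Γ N M) :
    (MonoidAlgebra.of K Γ ((QuotientGroup.mk g : Γ ⧸ N).out)) • x
      = (MonoidAlgebra.of K Γ g) • x := by
  set t := (QuotientGroup.mk g : Γ ⧸ N).out with ht
  have hmem : g⁻¹ * t ∈ N := by
    rw [← QuotientGroup.eq]
    rw [ht, QuotientGroup.out_eq']
  have : t = g * (g⁻¹ * t) := by group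
  rw [this, map_mul, mul_smul, of_smul_bar N hmem]

lemma findim_bar (M : ModuleCat.{0} (MonoidAlgebra K Γ)) [Module.Finite (MonoidAlgebra K Γ) M]
    (hidx : N.index ≠ 0) : Module.Finite K (M ⧸ coinvKer K Γ N M) := by
  classical
  haveI : Finite (Γ ⧸ N) := (Nat.card_ne_zero.mp hidx).2
  obtain ⟨S, hS⟩ := Module.Finite.fg_top (R := MonoidAlgebra K Γ) (M := M)
  set T : Set Γ := Set.range (fun c : Γ ⧸ N => c.out) with hT
  set G : Set (M ⧸ coinvKer K Γ N M) :=
    (fun p : Γ × M => (MonoidAlgebra.of K Γ p.1) • (Submodule.Quotient.mk p.2))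
      '' (T ×ˢ (S : Set M)) with hG
  have hGfin : G.Finite := ((Set.finite_range _).prod S.finite_toSet).image _
  set V : Submodule K (M ⧸ coinvKer K Γ N M) := Submodule.span K G with hV
  have hof : ∀ (g : Γ) (x), x ∈ V → (MonoidAlgebra.of K Γ g) • x ∈ V := by
    intro g x hx
    induction hx using Submodule.span_induction with
    | mem y hy =>
        obtain ⟨⟨t, m⟩, ⟨⟨c, rfl⟩, hm⟩, rfl⟩ := hy
        have : (MonoidAlgebra.of K Γ g) • ((MonoidAlgebra.of K Γ c.out)
            • (Submodule.Quotient.mk m : M ⧸ coinvKer K Γ N M))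
            = (MonoidAlgebra.of K Γ ((QuotientGroup.mk (g * c.out) : Γ ⧸ N).out))
              • (Submodule.Quotient.mk m) := by
          rw [of_out_smul, ← mul_smul, ← map_mul]
        rw [this]
        exact Submodule.subset_span
          ⟨⟨((QuotientGroup.mk (g * c.out) : Γ ⧸ N)).out, m⟩,
            ⟨⟨(QuotientGroup.mk (g * c.out) : Γ ⧸ N), rfl⟩, hm⟩, rfl⟩
    | zero => simpa using V.zero_mem
    | add a b _ _ ha hb => rw [smul_add]; exact V.add_mem ha hb
    | smul k y _ ih =>
        have : (MonoidAlgebra.of K Γ g) • (k • y) = k • ((MonoidAlgebra.of K Γ g) • y) := by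
          rw [kmod_smul, kmod_smul, smul_smul, smul_smul, ← Algebra.commutes]
        rw [this]
        exact V.smul_mem k ih
  have hR : ∀ (r : MonoidAlgebra K Γ) (x), x ∈ V → r • x ∈ V := by
    intro r
    refine MonoidAlgebra.induction_on (motive := fun r => ∀ x ∈ V, r • x ∈ V) r ?_ ?_ ?_
    · intro g x hx; exact hof g x hx
    · intro a b ha hb x hx; rw [add_smul]; exact V.add_mem (ha x hx) (hb x hx)
    · intro k a ih x hx
      have : (k • a) • x = k • (a • x) := by
        rw [Algebra.smul_def, mul_smul, kmod_smul]
      rw [this]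
      exact V.smul_mem k (ih x hx)
  have htop : ∀ x : M ⧸ coinvKer K Γ N M, x ∈ V := by
    intro x
    obtain ⟨m, rfl⟩ := Submodule.Quotient.mk_surjective _ x
    have hmS : m ∈ Submodule.span (MonoidAlgebra K Γ) (S : Set M) := by
      rw [hS]; trivial
    induction hmS using Submodule.span_induction with
    | mem m hm =>
        have h1 : (Submodule.Quotient.mk m : M ⧸ coinvKer K Γ N M)
            = (MonoidAlgebra.of K Γ ((QuotientGroup.mk (1 : Γ) : Γ ⧸ N).out))
              • Submodule.Quotient.mk m := by
          rw [of_out_smul, map_one, one_smul]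
        rw [h1]
        exact Submodule.subset_span
          ⟨⟨((QuotientGroup.mk (1 : Γ) : Γ ⧸ N)).out, m⟩,
            ⟨⟨(QuotientGroup.mk (1 : Γ) : Γ ⧸ N), rfl⟩, hm⟩, rfl⟩
    | zero => simpa using V.zero_mem
    | add a b _ _ ha hb => rw [Submodule.Quotient.mk_add]; exact V.add_mem ha hb
    | smul r m _ ih => rw [Submodule.Quotient.mk_smul]; exact hR r _ ih
  exact ⟨⟨hGfin.toFinset, by
    rw [Set.Finite.coe_toFinset]
    exact eq_top_iff.2 fun x _ => htop x⟩⟩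

section Pi
variable [N.Normal]

noncomputable local instance qmod :
    Module (MonoidAlgebra K Γ) (MonoidAlgebra K (Γ ⧸ N)) :=
  Module.compHom _ (MonoidAlgebra.mapDomainRingHom K (QuotientGroup.mk' N))

noncomputable def piLin :
    MonoidAlgebra K Γ →ₗ[MonoidAlgebra K Γ] MonoidAlgebra K (Γ ⧸ N) where
  toFun := MonoidAlgebra.mapDomainRingHom K (QuotientGroup.mk' N)
  map_add' := map_add _
  map_smul' r x := by
    show MonoidAlgebra.mapDomainRingHom K (QuotientGroup.mk' N) (r * x) = _
    rw [map_mul]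
    rfl

/-- The section `K[Γ/N] → K[Γ]` induced by choosing coset representatives. -/
noncomputable def theta (q : MonoidAlgebra K (Γ ⧸ N)) : MonoidAlgebra K Γ :=
  MonoidAlgebra.mapDomain Quotient.out q

lemma pi_apply (x : MonoidAlgebra K Γ) :
    MonoidAlgebra.mapDomainRingHom K (QuotientGroup.mk' N) x
      = MonoidAlgebra.mapDomain (⇑(QuotientGroup.mk' N)) x := rfl

lemma pi_of (g : Γ) :
    MonoidAlgebra.mapDomainRingHom K (QuotientGroup.mk' N) (MonoidAlgebra.of K Γ g)
      = MonoidAlgebra.of K (Γ ⧸ N) (QuotientGroup.mk g) :=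
  MonoidAlgebra.mapDomain_single

lemma pi_smul (k : K) (x : MonoidAlgebra K Γ) :
    MonoidAlgebra.mapDomainRingHom K (QuotientGroup.mk' N) (k • x)
      = k • MonoidAlgebra.mapDomainRingHom K (QuotientGroup.mk' N) x :=
  MonoidAlgebra.mapDomain_smul _ _ _

lemma theta_add (p q : MonoidAlgebra K (Γ ⧸ N)) :
    theta N (p + q) = theta N p + theta N q :=
  MonoidAlgebra.mapDomain_add _ _ _

lemma theta_smul (k : K) (q : MonoidAlgebra K (Γ ⧸ N)) :
    theta N (k • q) = k • theta N q :=
  MonoidAlgebra.mapDomain_smul _ _ _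

lemma theta_zero : theta N (0 : MonoidAlgebra K (Γ ⧸ N)) = 0 :=
  MonoidAlgebra.mapDomain_zero _

lemma theta_of (c : Γ ⧸ N) :
    theta N (MonoidAlgebra.of K (Γ ⧸ N) c) = MonoidAlgebra.of K Γ c.out :=
  MonoidAlgebra.mapDomain_single

lemma sub_theta_mem (x : MonoidAlgebra K Γ) :
    x - theta N (MonoidAlgebra.mapDomainRingHom K (QuotientGroup.mk' N) x)
      ∈ coinvKer K Γ N (ModuleCat.of (MonoidAlgebra K Γ) (MonoidAlgebra K Γ)) := by
  refine MonoidAlgebra.induction_on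
    (motive := fun y => y - theta N (MonoidAlgebra.mapDomainRingHom K (QuotientGroup.mk' N) y)
      ∈ coinvKer K Γ N (ModuleCat.of (MonoidAlgebra K Γ) (MonoidAlgebra K Γ))) x ?_ ?_ ?_
  · intro g
    set t := (QuotientGroup.mk g : Γ ⧸ N).out with htdef
    have hθ : theta N
        (MonoidAlgebra.mapDomainRingHom K (QuotientGroup.mk' N) (MonoidAlgebra.of K Γ g))
        = MonoidAlgebra.of K Γ t := by
      rw [pi_of, theta_of]
    rw [hθ]
    have hmem : t⁻¹ * g ∈ N := by
      rw [← QuotientGroup.eq, htdef, QuotientGroup.out_eq']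
    have hg : g = t * (t⁻¹ * g) := by group
    have h1 : MonoidAlgebra.of K Γ g - MonoidAlgebra.of K Γ t
        = (MonoidAlgebra.of K Γ t) •
          ((MonoidAlgebra.of K Γ (t⁻¹ * g)) • (1 : MonoidAlgebra K Γ) - 1) := by
      rw [smul_sub]
      show _ = MonoidAlgebra.of K Γ t * (MonoidAlgebra.of K Γ (t⁻¹ * g) * 1)
          - MonoidAlgebra.of K Γ t * 1
      rw [mul_one, mul_one, ← map_mul, ← hg]
    rw [h1]
    exact Submodule.smul_mem _ (MonoidAlgebra.of K Γ t) (gen_mem (M := ModuleCat.of (MonoidAlgebra K Γ) (MonoidAlgebra K Γ)) N hmem (1 : MonoidAlgebra K Γ))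
  · intro a b ha hb
    have h : a + b - theta N
          (MonoidAlgebra.mapDomainRingHom K (QuotientGroup.mk' N) (a + b))
        = (a - theta N (MonoidAlgebra.mapDomainRingHom K (QuotientGroup.mk' N) a))
          + (b - theta N (MonoidAlgebra.mapDomainRingHom K (QuotientGroup.mk' N) b)) := by
      rw [map_add, theta_add]
      abel
    rw [h]
    exact Submodule.add_mem _ ha hb
  · intro k a ha
    have h : k • a - theta N
          (MonoidAlgebra.mapDomainRingHom K (QuotientGroup.mk' N) (k • a))
        = k • (a - theta N (MonoidAlgebra.mapDomainRingHom K (QuotientGroup.mk' N) a)) := by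
      rw [pi_smul, theta_smul, smul_sub]
    rw [h]
    have h2 : k • (a - theta N (MonoidAlgebra.mapDomainRingHom K (QuotientGroup.mk' N) a))
        = (algebraMap K (MonoidAlgebra K Γ) k)
          • (a - theta N (MonoidAlgebra.mapDomainRingHom K (QuotientGroup.mk' N) a)) := by
      rw [Algebra.smul_def]; rfl
    rw [h2]
    exact Submodule.smul_mem _ _ ha

lemma pi_surj :
    Function.Surjective
      (MonoidAlgebra.mapDomainRingHom K (QuotientGroup.mk' N) :
        MonoidAlgebra K Γ → MonoidAlgebra K (Γ ⧸ N)) := by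
  intro q
  refine ⟨MonoidAlgebra.mapDomain Quotient.out q, ?_⟩
  show MonoidAlgebra.ofCoeff (Finsupp.mapDomain _ (Finsupp.mapDomain _ q.coeff)) = q
  rw [← Finsupp.mapDomain_comp]
  have : ((QuotientGroup.mk' N) ∘ Quotient.out : Γ ⧸ N → Γ ⧸ N) = id := by
    funext c; exact QuotientGroup.out_eq' c
  rw [this, Finsupp.mapDomain_id, MonoidAlgebra.ofCoeff_coeff]

lemma ck_le_ker :
    coinvKer K Γ N (ModuleCat.of (MonoidAlgebra K Γ) (MonoidAlgebra K Γ))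
      ≤ LinearMap.ker (piLin N) := by
  rw [coinvKer, Submodule.span_le]
  rintro x ⟨n, hn, m, rfl⟩
  have h1 : (QuotientGroup.mk n : Γ ⧸ N) = 1 := (QuotientGroup.eq_one_iff n).2 hn
  simp only [SetLike.mem_coe, LinearMap.mem_ker, map_sub]
  have h3 : piLin N ((MonoidAlgebra.of K Γ n) • m) = piLin N m := by
    rw [map_smul]
    show MonoidAlgebra.mapDomainRingHom K (QuotientGroup.mk' N) (MonoidAlgebra.of K Γ n)
        * piLin N m = piLin N m
    have h2 : MonoidAlgebra.mapDomainRingHom K (QuotientGroup.mk' N) (MonoidAlgebra.of K Γ n)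
        = 1 := by
      rw [pi_of, h1]
      rfl
    rw [h2, one_mul]
  rw [sub_eq_zero]
  exact h3

lemma ker_le_ck :
    LinearMap.ker (piLin N)
      ≤ coinvKer K Γ N (ModuleCat.of (MonoidAlgebra K Γ) (MonoidAlgebra K Γ)) := by
  intro x hx
  have h := sub_theta_mem N x
  rw [LinearMap.mem_ker] at hx
  have hx' : MonoidAlgebra.mapDomainRingHom K (QuotientGroup.mk' N) x = 0 := hx
  rw [hx'] at h
  rwa [theta_zero, sub_zero] at h

noncomputable def quotEquiv :
    ((ModuleCat.of (MonoidAlgebra K Γ) (MonoidAlgebra K Γ) : ModuleCat.{0} (MonoidAlgebra K Γ))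
        ⧸ coinvKer K Γ N (ModuleCat.of (MonoidAlgebra K Γ) (MonoidAlgebra K Γ)))
      ≃ₗ[MonoidAlgebra K Γ] MonoidAlgebra K (Γ ⧸ N) :=
  LinearEquiv.ofBijective (Submodule.liftQ _ (piLin N) (ck_le_ker N))
    ⟨by
      rw [← LinearMap.ker_eq_bot]
      exact Submodule.ker_liftQ_eq_bot _ _ _ (ker_le_ck N),
     by
      intro q
      obtain ⟨x, hx⟩ := pi_surj N q
      exact ⟨Submodule.Quotient.mk x, hx⟩⟩

lemma finrank_bar_R (hidx : N.index ≠ 0) :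
    Module.finrank K
      ((ModuleCat.of (MonoidAlgebra K Γ) (MonoidAlgebra K Γ) : ModuleCat.{0} (MonoidAlgebra K Γ))
        ⧸ coinvKer K Γ N (ModuleCat.of (MonoidAlgebra K Γ) (MonoidAlgebra K Γ)))
      = N.index := by
  haveI : Finite (Γ ⧸ N) := (Nat.card_ne_zero.mp hidx).2
  haveI := Fintype.ofFinite (Γ ⧸ N)
  let e := quotEquiv (K := K) (Γ := Γ) N
  let eK : ((ModuleCat.of (MonoidAlgebra K Γ) (MonoidAlgebra K Γ) : ModuleCat.{0} (MonoidAlgebra K Γ))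
        ⧸ coinvKer K Γ N (ModuleCat.of (MonoidAlgebra K Γ) (MonoidAlgebra K Γ)))
      ≃ₗ[K] MonoidAlgebra K (Γ ⧸ N) :=
    { toFun := e, invFun := e.symm, left_inv := e.left_inv, right_inv := e.right_inv,
      map_add' := e.map_add,
      map_smul' := fun k x => by
        simp only [RingHom.id_apply]
        rw [kmod_smul, map_smul]
        show MonoidAlgebra.mapDomainRingHom K (QuotientGroup.mk' N)
            (algebraMap K (MonoidAlgebra K Γ) k) * e x = k • e x
        have h1 : MonoidAlgebra.mapDomainRingHom K (QuotientGroup.mk' N)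
            (algebraMap K (MonoidAlgebra K Γ) k)
            = algebraMap K (MonoidAlgebra K (Γ ⧸ N)) k := by
          rw [Algebra.algebraMap_eq_smul_one, Algebra.algebraMap_eq_smul_one,
            pi_smul, map_one]
        rw [h1, ← Algebra.smul_def] }
  rw [eK.finrank_eq]
  rw [(MonoidAlgebra.coeffLinearEquiv K : MonoidAlgebra K (Γ ⧸ N) ≃ₗ[K] ((Γ ⧸ N) →₀ K)).finrank_eq]
  rw [Module.finrank_finsupp_self, Subgroup.index, Nat.card_eq_fintype_card]

end Pi


lemma finrank_restrict (M : ModuleCat.{0} (MonoidAlgebra K Γ)) :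
    Module.finrank K (RestrictScalars K (MonoidAlgebra K Γ) (M ⧸ coinvKer K Γ N M))
      = Module.finrank K (M ⧸ coinvKer K Γ N M) := rfl

noncomputable def barMapK {M M' : ModuleCat.{0} (MonoidAlgebra K Γ)}
    (f : M →ₗ[MonoidAlgebra K Γ] M') :
    (M ⧸ coinvKer K Γ N M) →ₗ[K] (M' ⧸ coinvKer K Γ N M') where
  toFun := barMap N f
  map_add' := map_add _
  map_smul' k x := by
    simp only [RingHom.id_apply]
    rw [kmod_smul, map_smul, kmod_smul]

noncomputable def barEquiv {M M' : ModuleCat.{0} (MonoidAlgebra K Γ)}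
    (e : M ≃ₗ[MonoidAlgebra K Γ] M') :
    (M ⧸ coinvKer K Γ N M) ≃ₗ[MonoidAlgebra K Γ] (M' ⧸ coinvKer K Γ N M') :=
  Submodule.Quotient.equiv _ _ e (by
    refine le_antisymm (Submodule.map_le_iff_le_comap.2 (ck_comap N e.toLinearMap)) ?_
    intro x hx
    exact ⟨e.symm x, ck_comap N e.symm.toLinearMap hx, e.apply_symm_apply x⟩)

noncomputable def barEquivK {M M' : ModuleCat.{0} (MonoidAlgebra K Γ)}
    (e : M ≃ₗ[MonoidAlgebra K Γ] M') :
    (M ⧸ coinvKer K Γ N M) ≃ₗ[K] (M' ⧸ coinvKer K Γ N M') where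
  toFun := barEquiv N e
  invFun := (barEquiv N e).symm
  left_inv := (barEquiv N e).left_inv
  right_inv := (barEquiv N e).right_inv
  map_add' := map_add _
  map_smul' k x := by
    simp only [RingHom.id_apply]
    rw [kmod_smul, map_smul, kmod_smul]

lemma finrank_exact (hidx : N.index ≠ 0) {M₁ M₂ M₃ : ModuleCat.{0} (MonoidAlgebra K Γ)}
    (h₁ : Module.Finite (MonoidAlgebra K Γ) M₁) (h₂ : Module.Finite (MonoidAlgebra K Γ) M₂)
    (h₃ : Module.Finite (MonoidAlgebra K Γ) M₃)
    (f : M₁ →ₗ[MonoidAlgebra K Γ] M₂) (g : M₂ →ₗ[MonoidAlgebra K Γ] M₃)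
    (hfg : Function.Exact f g) (hg : Function.Surjective g) :
    Module.finrank K (M₃ ⧸ coinvKer K Γ N M₃) ≤ Module.finrank K (M₂ ⧸ coinvKer K Γ N M₂)
    ∧ Module.finrank K (M₂ ⧸ coinvKer K Γ N M₂)
        ≤ Module.finrank K (M₁ ⧸ coinvKer K Γ N M₁)
          + Module.finrank K (M₃ ⧸ coinvKer K Γ N M₃) := by
  haveI := h₁; haveI := h₂; haveI := h₃
  haveI F1 : Module.Finite K (M₁ ⧸ coinvKer K Γ N M₁) := findim_bar N M₁ hidx
  haveI F2 : Module.Finite K (M₂ ⧸ coinvKer K Γ N M₂) := findim_bar N M₂ hidx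
  haveI F3 : Module.Finite K (M₃ ⧸ coinvKer K Γ N M₃) := findim_bar N M₃ hidx
  have hsurj : Function.Surjective (barMapK N g) := barMap_surjective N hg
  have hexK : Function.Exact (barMapK N f) (barMapK N g) := barMap_exact N hfg hg
  have hker : LinearMap.ker (barMapK N g) = LinearMap.range (barMapK N f) :=
    LinearMap.exact_iff.1 hexK
  have e1 : Module.finrank K (LinearMap.range (barMapK N g))
      = Module.finrank K (M₃ ⧸ coinvKer K Γ N M₃) := by
    rw [LinearMap.range_eq_top.2 hsurj, finrank_top]
  have e2 := LinearMap.finrank_range_add_finrank_ker (barMapK N g)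
  constructor
  · rw [← e1]
    exact LinearMap.finrank_range_le (barMapK N g)
  · have e3 : Module.finrank K (LinearMap.ker (barMapK N g))
        ≤ Module.finrank K (M₁ ⧸ coinvKer K Γ N M₁) := by
      rw [hker]
      exact LinearMap.finrank_range_le (barMapK N f)
    omega

lemma finrank_add (hidx : N.index ≠ 0) (M M' : ModuleCat.{0} (MonoidAlgebra K Γ))
    (h₁ : Module.Finite (MonoidAlgebra K Γ) M) (h₂ : Module.Finite (MonoidAlgebra K Γ) M') :
    Module.finrank K
        ((ModuleCat.of (MonoidAlgebra K Γ) (M × M') : ModuleCat.{0} (MonoidAlgebra K Γ))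
          ⧸ coinvKer K Γ N (ModuleCat.of (MonoidAlgebra K Γ) (M × M')))
      = Module.finrank K (M ⧸ coinvKer K Γ N M)
        + Module.finrank K (M' ⧸ coinvKer K Γ N M') := by
  haveI := h₁; haveI := h₂
  haveI : Module.Finite (MonoidAlgebra K Γ)
    (ModuleCat.of (MonoidAlgebra K Γ) (M × M') : ModuleCat.{0} (MonoidAlgebra K Γ)) :=
    Module.Finite.prod (M := ↑M) (N := ↑M')
  set P : ModuleCat.{0} (MonoidAlgebra K Γ) := ModuleCat.of (MonoidAlgebra K Γ) (M × M')
    with hP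
  haveI F1 : Module.Finite K (M ⧸ coinvKer K Γ N M) := findim_bar N M hidx
  haveI F2 : Module.Finite K (M' ⧸ coinvKer K Γ N M') := findim_bar N M' hidx
  haveI F3 : Module.Finite K (P ⧸ coinvKer K Γ N P) := findim_bar N P hidx
  let f : M →ₗ[MonoidAlgebra K Γ] P := LinearMap.inl (MonoidAlgebra K Γ) M M'
  let g : P →ₗ[MonoidAlgebra K Γ] M' := LinearMap.snd (MonoidAlgebra K Γ) M M'
  have hfg : Function.Exact f g := Function.Exact.inl_snd
  have hg : Function.Surjective g := fun x => ⟨(0, x), rfl⟩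
  have hsurj : Function.Surjective (barMapK N g) := barMap_surjective N hg
  have hexK : Function.Exact (barMapK N f) (barMapK N g) := barMap_exact N hfg hg
  have hker : LinearMap.ker (barMapK N g) = LinearMap.range (barMapK N f) :=
    LinearMap.exact_iff.1 hexK
  have hinj : Function.Injective (barMapK N f) := by
    have hli : ∀ x, barMap N (LinearMap.fst (MonoidAlgebra K Γ) M M') (barMap N f x) = x := by
      intro x
      rw [← LinearMap.comp_apply, barMap_comp]
      rw [show (LinearMap.fst (MonoidAlgebra K Γ) M M').comp f = LinearMap.id from rfl,
        barMap_id]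
      rfl
    exact Function.LeftInverse.injective hli
  have e1 : Module.finrank K (LinearMap.range (barMapK N g))
      = Module.finrank K (M' ⧸ coinvKer K Γ N M') := by
    rw [LinearMap.range_eq_top.2 hsurj, finrank_top]
  have e2 := LinearMap.finrank_range_add_finrank_ker (barMapK N g)
  have e3 : Module.finrank K (LinearMap.ker (barMapK N g))
      = Module.finrank K (M ⧸ coinvKer K Γ N M) := by
    rw [hker]
    exact LinearMap.finrank_range_of_inj hinj
  have e5 : Module.finrank K (LinearMap.range (barMapK N g)) + Module.finrank K (LinearMap.ker (barMapK N g))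
      = Module.finrank K ((ModuleCat.of (MonoidAlgebra K Γ) (M × M') : ModuleCat.{0} (MonoidAlgebra K Γ))
          ⧸ coinvKer K Γ N (ModuleCat.of (MonoidAlgebra K Γ) (M × M'))) := e2
  omega


lemma main_congr {M M' : ModuleCat.{0} (MonoidAlgebra K Γ)}
    (e : M ≃ₗ[MonoidAlgebra K Γ] M') :
    Module.finrank K (RestrictScalars K (MonoidAlgebra K Γ) (M ⧸ coinvKer K Γ N M))
      = Module.finrank K (RestrictScalars K (MonoidAlgebra K Γ) (M' ⧸ coinvKer K Γ N M')) := by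
  rw [finrank_restrict, finrank_restrict]
  exact (barEquivK N e).finrank_eq

lemma main_zero :
    Module.finrank K (RestrictScalars K (MonoidAlgebra K Γ)
      ((ModuleCat.of (MonoidAlgebra K Γ) PUnit : ModuleCat.{0} (MonoidAlgebra K Γ))
        ⧸ coinvKer K Γ N (ModuleCat.of (MonoidAlgebra K Γ) PUnit))) = 0 := by
  rw [finrank_restrict]
  haveI : Subsingleton
      (↑(ModuleCat.of (MonoidAlgebra K Γ) PUnit : ModuleCat.{0} (MonoidAlgebra K Γ))
        ⧸ coinvKer K Γ N (ModuleCat.of (MonoidAlgebra K Γ) PUnit)) := by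
    refine ⟨fun a b => ?_⟩
    obtain ⟨x, rfl⟩ := Submodule.Quotient.mk_surjective _ a
    obtain ⟨y, rfl⟩ := Submodule.Quotient.mk_surjective _ b
    have : x = y := Subsingleton.elim (α := PUnit) x y
    rw [this]
  exact Module.finrank_zero_of_subsingleton

lemma main_one [N.Normal] (hidx : N.index ≠ 0) :
    Module.finrank K (RestrictScalars K (MonoidAlgebra K Γ)
      ((ModuleCat.of (MonoidAlgebra K Γ) (MonoidAlgebra K Γ) : ModuleCat.{0} (MonoidAlgebra K Γ))
        ⧸ coinvKer K Γ N (ModuleCat.of (MonoidAlgebra K Γ) (MonoidAlgebra K Γ)))) = N.index := by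
  rw [finrank_restrict]
  exact finrank_bar_R N hidx

lemma main_add (hidx : N.index ≠ 0) (M M' : ModuleCat.{0} (MonoidAlgebra K Γ))
    (h₁ : Module.Finite (MonoidAlgebra K Γ) M) (h₂ : Module.Finite (MonoidAlgebra K Γ) M') :
    Module.finrank K (RestrictScalars K (MonoidAlgebra K Γ)
        ((ModuleCat.of (MonoidAlgebra K Γ) (M × M') : ModuleCat.{0} (MonoidAlgebra K Γ))
          ⧸ coinvKer K Γ N (ModuleCat.of (MonoidAlgebra K Γ) (M × M'))))
      = Module.finrank K (RestrictScalars K (MonoidAlgebra K Γ) (M ⧸ coinvKer K Γ N M))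
        + Module.finrank K (RestrictScalars K (MonoidAlgebra K Γ) (M' ⧸ coinvKer K Γ N M')) := by
  rw [finrank_restrict, finrank_restrict, finrank_restrict]
  exact finrank_add N hidx M M' h₁ h₂

lemma main_exact (hidx : N.index ≠ 0) {M₁ M₂ M₃ : ModuleCat.{0} (MonoidAlgebra K Γ)}
    (h₁ : Module.Finite (MonoidAlgebra K Γ) M₁) (h₂ : Module.Finite (MonoidAlgebra K Γ) M₂)
    (h₃ : Module.Finite (MonoidAlgebra K Γ) M₃)
    (f : M₁ →ₗ[MonoidAlgebra K Γ] M₂) (g : M₂ →ₗ[MonoidAlgebra K Γ] M₃)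
    (hfg : Function.Exact f g) (hg : Function.Surjective g) :
    Module.finrank K (RestrictScalars K (MonoidAlgebra K Γ) (M₃ ⧸ coinvKer K Γ N M₃))
        ≤ Module.finrank K (RestrictScalars K (MonoidAlgebra K Γ) (M₂ ⧸ coinvKer K Γ N M₂))
    ∧ Module.finrank K (RestrictScalars K (MonoidAlgebra K Γ) (M₂ ⧸ coinvKer K Γ N M₂))
        ≤ Module.finrank K (RestrictScalars K (MonoidAlgebra K Γ) (M₁ ⧸ coinvKer K Γ N M₁))
          + Module.finrank K (RestrictScalars K (MonoidAlgebra K Γ) (M₃ ⧸ coinvKer K Γ N M₃)) := by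
  rw [finrank_restrict, finrank_restrict, finrank_restrict]
  exact finrank_exact N hidx h₁ h₂ h₃ f g hfg hg

end Stmt12Aux

/-- Let `Γ` be a group, `K` a field and `N` a normal subgroup of
finite index in `Γ`.  Then the assignment
`M ↦ dim_K (K ⊗_{K[N]} M) / |Γ : N|` (for finitely presented `K[Γ]`-modules `M`) is
a Sylvester module rank function on `K[Γ]`; here `K ⊗_{K[N]} M` is realised as the
module of `N`-coinvariants of `M`, whose `K`-dimension is computed after restricting
scalars along `K → K[Γ]`. -/
theorem stmt12 (K : Type) [Field K] (Γ : Type) [Group Γ]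
    (N : Subgroup Γ) (hN : N.Normal) (hidx : N.index ≠ 0) :
    ∃ ρ : SylvesterRank (MonoidAlgebra K Γ),
      ∀ M : ModuleCat.{0} (MonoidAlgebra K Γ), Module.FinitePresentation (MonoidAlgebra K Γ) M →
        ρ.d M = (Module.finrank K
            (RestrictScalars K (MonoidAlgebra K Γ) (M ⧸ coinvKer K Γ N M)) : ℝ)
          / (N.index : ℝ) := by
  classical
  haveI := hN
  have hpos : (0 : ℝ) < (N.index : ℝ) := by
    exact_mod_cast Nat.pos_of_ne_zero hidx
  refine ⟨⟨fun M => (Module.finrank K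
      (RestrictScalars K (MonoidAlgebra K Γ) (M ⧸ coinvKer K Γ N M)) : ℝ) / (N.index : ℝ),
    ?_, ?_, ?_, ?_, ?_, ?_⟩, fun M _ => rfl⟩
  · intro M _
    positivity
  · rintro M M' hM hM' ⟨e⟩
    rw [Stmt12Aux.main_congr N e]
  · dsimp only
    rw [Stmt12Aux.main_zero N]
    norm_num
  · dsimp only
    rw [Stmt12Aux.main_one N hidx]
    exact div_self (ne_of_gt hpos)
  · intro M M' hM hM'
    haveI := hM; haveI := hM'
    dsimp only
    rw [Stmt12Aux.main_add N hidx M M' inferInstance inferInstance]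
    push_cast
    rw [add_div]
  · intro M₁ M₂ M₃ h₁ h₂ h₃ f g hfg hg
    haveI := h₁; haveI := h₂; haveI := h₃
    obtain ⟨l1, l2⟩ := Stmt12Aux.main_exact N hidx
      (inferInstance : Module.Finite (MonoidAlgebra K Γ) M₁)
      (inferInstance : Module.Finite (MonoidAlgebra K Γ) M₂)
      (inferInstance : Module.Finite (MonoidAlgebra K Γ) M₃) f g hfg hg
    constructor
    · exact (div_le_div_iff_of_pos_right hpos).2 (by exact_mod_cast l1)
    · rw [← add_div]
      exact (div_le_div_iff_of_pos_right hpos).2 (by exact_mod_cast l2)
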